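/- For every n ≥ 1, the doubled Odd graph on 2n+1 points — the bipartite graph whose vertices are the n-element and the (n+1)-element subsets of a fixed (2n+1)-element set, with an n-set adjacent to an (n+1)-set iff the former is contained in the latter — does not admit perfect state transfer between any pair of vertices at any time. -/

import Mathlib

open Matrix

/-- The transition matrix `U(t) = exp(itA)` of the continuous-time quantum walk on `G`. -/
noncomputable def transitionMatrix {V : Type*} [Fintype V] [DecidableEq V]
    (G : SimpleGraph V) (t : ℝ) : Matrix V V ℂ :=
  letI := Classical.decRel G.Adj
  NormedSpace.exp ((Complex.I * (t : ℂ)) • G.adjMatrix ℂ)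

/-- `G` admits perfect state transfer from `u` to `v` at time `t`. -/
def HasPST {V : Type*} [Fintype V] [DecidableEq V]
    (G : SimpleGraph V) (u v : V) (t : ℝ) : Prop :=
  u ≠ v ∧ ∃ μ : ℂ, transitionMatrix G t *ᵥ (Pi.single u 1 : V → ℂ)
      = μ • (Pi.single v 1 : V → ℂ)

/-- The doubled Odd graph on `2n+1` points: vertices are the `n`-element and the
`(n+1)`-element subsets of a fixed `(2n+1)`-element set, an `n`-set being adjacent
to an `(n+1)`-set iff the former is contained in the latter. -/
def doubledOddGraph (n : ℕ) :
    SimpleGraph {s : Finset (Fin (2 * n + 1)) // s.card = n ∨ s.card = n + 1} :=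
  SimpleGraph.fromRel (fun s t => s.1 ⊆ t.1)

/-! ### Auxiliary analytic lemmas -/

lemma pow_mulVec_eigen {V : Type*} [Fintype V] [DecidableEq V] (M : Matrix V V ℂ)
    (f : V → ℂ) (c : ℂ) (h : M *ᵥ f = c • f) (k : ℕ) : (M ^ k) *ᵥ f = (c ^ k) • f := by
  induction k with
  | zero => simp
  | succ k ih =>
    rw [pow_succ, pow_succ, ← Matrix.mulVec_mulVec, h, Matrix.mulVec_smul, ih,
      smul_smul, mul_comm]

lemma exp_mulVec_eigen {V : Type*} [Fintype V] [DecidableEq V] (M : Matrix V V ℂ)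
    (f : V → ℂ) (c : ℂ) (h : M *ᵥ f = c • f) :
    NormedSpace.exp M *ᵥ f = Complex.exp c • f := by
  letI : SeminormedRing (Matrix V V ℂ) := Matrix.linftyOpSemiNormedRing
  letI : NormedRing (Matrix V V ℂ) := Matrix.linftyOpNormedRing
  letI : NormedAlgebra ℂ (Matrix V V ℂ) := Matrix.linftyOpNormedAlgebra
  let L : Matrix V V ℂ →ₗ[ℂ] (V → ℂ) :=
    { toFun := fun N => N *ᵥ f
      map_add' := fun A B => Matrix.add_mulVec A B f
      map_smul' := fun r A => (Matrix.smul_mulVec r A f) }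
  let L' : Matrix V V ℂ →L[ℂ] (V → ℂ) := LinearMap.toContinuousLinearMap L
  have hL : ∀ N, L' N = N *ᵥ f := fun N => rfl
  rw [NormedSpace.exp_eq_tsum (𝕂 := ℂ)]
  have h1 : (∑' (k : ℕ), ((k.factorial : ℂ)⁻¹ • M ^ k)) *ᵥ f
      = ∑' (k : ℕ), (((k.factorial : ℂ)⁻¹ • M ^ k) *ᵥ f) := by
    rw [← hL, L'.map_tsum (NormedSpace.expSeries_summable' (𝕂 := ℂ) M)]
    simp_rw [hL]
  rw [h1]
  have h2 : ∀ k : ℕ, ((k.factorial : ℂ)⁻¹ • M ^ k) *ᵥ f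
      = ((k.factorial : ℂ)⁻¹ * c ^ k) • f := by
    intro k
    rw [Matrix.smul_mulVec, pow_mulVec_eigen M f c h k, smul_smul]
  simp_rw [h2]
  rw [Summable.tsum_smul_const]
  · congr 1
    rw [Complex.exp_eq_exp_ℂ, NormedSpace.exp_eq_tsum (𝕂 := ℂ)]
    simp [smul_eq_mul]
  · have := NormedSpace.expSeries_summable' (𝕂 := ℂ) c
    simpa [smul_eq_mul] using this

lemma exp_neg_mul_exp {V : Type*} [Fintype V] [DecidableEq V] (M : Matrix V V ℂ) :
    NormedSpace.exp (-M) * NormedSpace.exp M = 1 := by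
  rw [← Matrix.exp_add_of_commute (-M) M ((Commute.refl M).neg_left), neg_add_cancel,
    NormedSpace.exp_zero]

lemma pst_mu_ne_zero {V : Type*} [Fintype V] [DecidableEq V] (G : SimpleGraph V) (t : ℝ)
    (u v : V) (μ : ℂ)
    (hU : transitionMatrix G t *ᵥ (Pi.single u 1 : V → ℂ) = μ • (Pi.single v 1 : V → ℂ)) :
    μ ≠ 0 := by
  intro h0
  rw [h0, zero_smul] at hU
  letI := Classical.decRel G.Adj
  have h2 := congrArg
    (fun w => NormedSpace.exp (-((Complex.I * (t : ℂ)) • G.adjMatrix ℂ)) *ᵥ w) hU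
  simp only [Matrix.mulVec_mulVec, Matrix.mulVec_zero] at h2
  rw [show transitionMatrix G t
      = NormedSpace.exp ((Complex.I * (t : ℂ)) • G.adjMatrix ℂ) from rfl,
    exp_neg_mul_exp, Matrix.one_mulVec] at h2
  have := congrFun h2 u
  simp [Pi.single_apply] at this

lemma pst_eigen_rel {V : Type*} [Fintype V] [DecidableEq V] (G : SimpleGraph V) (t : ℝ)
    (u v : V) (μ : ℂ)
    (hU : transitionMatrix G t *ᵥ (Pi.single u 1 : V → ℂ) = μ • (Pi.single v 1 : V → ℂ))
    (f : V → ℂ) (θ : ℂ)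
    (hf : (letI := Classical.decRel G.Adj; G.adjMatrix ℂ) *ᵥ f = θ • f) :
    Complex.exp (Complex.I * (t : ℂ) * θ) * f u = μ * f v := by
  letI := Classical.decRel G.Adj
  set M : Matrix V V ℂ := (Complex.I * (t : ℂ)) • G.adjMatrix ℂ with hMdef
  have hM : M *ᵥ f = (Complex.I * (t : ℂ) * θ) • f := by
    rw [hMdef, Matrix.smul_mulVec, hf, smul_smul]
  have hexp : NormedSpace.exp M *ᵥ f = Complex.exp (Complex.I * (t : ℂ) * θ) • f :=
    exp_mulVec_eigen M f _ hM
  have hMT : Mᵀ = M := by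
    rw [hMdef, Matrix.transpose_smul, SimpleGraph.transpose_adjMatrix]
  have hsymm : (NormedSpace.exp M)ᵀ = NormedSpace.exp M := by
    rw [← Matrix.exp_transpose, hMT]
  have key : f ⬝ᵥ (transitionMatrix G t *ᵥ (Pi.single u 1 : V → ℂ))
      = f ⬝ᵥ (μ • (Pi.single v 1 : V → ℂ)) := by rw [hU]
  have hT : transitionMatrix G t = NormedSpace.exp M := rfl
  rw [hT, dotProduct_mulVec] at key
  have hvm : f ᵥ* NormedSpace.exp M = Complex.exp (Complex.I * (t : ℂ) * θ) • f := by
    rw [← Matrix.mulVec_transpose, hsymm, hexp]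
  rw [hvm] at key
  simpa [dotProduct, Pi.single_apply, mul_comm] using key

/-! ### Combinatorics of the doubled odd graph -/

namespace DOG
variable {n : ℕ}

abbrev V (n : ℕ) := {s : Finset (Fin (2 * n + 1)) // s.card = n ∨ s.card = n + 1}

lemma adj_iff (u v : V n) :
    (doubledOddGraph n).Adj u v ↔ u ≠ v ∧ (u.1 ⊆ v.1 ∨ v.1 ⊆ u.1) := by
  simp [doubledOddGraph, SimpleGraph.fromRel_adj]

lemma adj_small {u v : V n} (hu : u.1.card = n) :
    (doubledOddGraph n).Adj u v ↔ ∃ z, z ∉ u.1 ∧ v.1 = insert z u.1 := by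
  rw [adj_iff]
  constructor
  · rintro ⟨hne, hsub | hsub⟩
    · have hv : v.1.card = n + 1 := by
        rcases v.2 with h | h
        · exact absurd (Subtype.ext (Finset.eq_of_subset_of_card_le hsub (by omega))) hne
        · exact h
      have hcard : (v.1 \ u.1).card = 1 := by
        rw [Finset.card_sdiff_of_subset hsub, hv, hu]; omega
      obtain ⟨z, hz⟩ := Finset.card_eq_one.mp hcard
      refine ⟨z, ?_, ?_⟩
      · have : z ∈ v.1 \ u.1 := hz ▸ Finset.mem_singleton_self z
        exact (Finset.mem_sdiff.mp this).2
      · have h2 := Finset.union_sdiff_of_subset hsub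
        rw [hz] at h2
        rw [← h2, Finset.insert_eq, Finset.union_comm]
    · exfalso
      have : v.1 = u.1 := Finset.eq_of_subset_of_card_le hsub
        (by rw [hu]; rcases v.2 with h | h <;> omega)
      exact hne (Subtype.ext this.symm)
  · rintro ⟨z, hz, hv⟩
    have hvc : v.1.card = n + 1 := by rw [hv, Finset.card_insert_of_notMem hz, hu]
    refine ⟨fun h => by rw [h] at hu; omega, Or.inl ?_⟩
    rw [hv]; exact Finset.subset_insert z u.1

lemma adj_big {u v : V n} (hu : u.1.card = n + 1) :
    (doubledOddGraph n).Adj u v ↔ ∃ z, z ∈ u.1 ∧ v.1 = u.1.erase z := by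
  rw [adj_iff]
  constructor
  · rintro ⟨hne, hsub | hsub⟩
    · exfalso
      have : u.1 = v.1 := Finset.eq_of_subset_of_card_le hsub
        (by rw [hu]; rcases v.2 with h | h <;> omega)
      exact hne (Subtype.ext this)
    · have hv : v.1.card = n := by
        rcases v.2 with h | h
        · exact h
        · exact absurd (Subtype.ext (Finset.eq_of_subset_of_card_le hsub (by omega)).symm) hne
      have hcard : (u.1 \ v.1).card = 1 := by
        rw [Finset.card_sdiff_of_subset hsub, hv, hu]; omega
      obtain ⟨z, hz⟩ := Finset.card_eq_one.mp hcard
      refine ⟨z, ?_, ?_⟩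
      · have : z ∈ u.1 \ v.1 := hz ▸ Finset.mem_singleton_self z
        exact (Finset.mem_sdiff.mp this).1
      · have h2 : u.1 \ (u.1 \ v.1) = v.1 := Finset.sdiff_sdiff_eq_self hsub
        rw [hz] at h2
        rw [← h2, Finset.erase_eq]
  · rintro ⟨z, hz, hv⟩
    have hvc : v.1.card = n := by rw [hv, Finset.card_erase_of_mem hz, hu]; omega
    refine ⟨fun h => by rw [h] at hu; omega, Or.inr ?_⟩
    rw [hv]; exact Finset.erase_subset z u.1

/-- vertex given by inserting `z` into a small vertex -/
def insV (u : V n) (z : Fin (2 * n + 1)) (hu : u.1.card = n) : V n :=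
  ⟨insert z u.1, by
    by_cases h : z ∈ u.1
    · left; rw [Finset.insert_eq_self.mpr h]; exact hu
    · right; rw [Finset.card_insert_of_notMem h, hu]⟩

lemma insV_def (u : V n) (z : Fin (2 * n + 1)) (hu : u.1.card = n) :
    (insV u z hu).1 = insert z u.1 := rfl

/-- vertex given by erasing `z` from a big vertex -/
def eraseV (u : V n) (z : Fin (2 * n + 1)) (hu : u.1.card = n + 1) : V n :=
  ⟨u.1.erase z, by
    by_cases h : z ∈ u.1
    · left; rw [Finset.card_erase_of_mem h, hu]; omega
    · right; rw [Finset.erase_eq_of_notMem h]; exact hu⟩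

lemma eraseV_def (u : V n) (z : Fin (2 * n + 1)) (hu : u.1.card = n + 1) :
    (eraseV u z hu).1 = u.1.erase z := rfl

lemma sum_small [inst : DecidableRel (doubledOddGraph n).Adj] (f : V n → ℂ) (u : V n)
    (hu : u.1.card = n) :
    ∑ v : V n, (if (doubledOddGraph n).Adj u v then f v else 0)
      = ∑ z ∈ u.1ᶜ, f (insV u z hu) := by
  rw [← Finset.sum_filter]
  refine (Finset.sum_bij (fun z hz => insV u z hu) ?_ ?_ ?_ ?_).symm
  · intro z hz
    simp only [Finset.mem_filter, Finset.mem_univ, true_and]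
    rw [adj_small hu]
    exact ⟨z, by simpa using hz, rfl⟩
  · intro a ha b hb hab
    have ha' : a ∉ u.1 := by simpa using ha
    have : insert a u.1 = insert b u.1 := congrArg Subtype.val hab
    have : a ∈ insert b u.1 := this ▸ Finset.mem_insert_self a u.1
    rcases Finset.mem_insert.mp this with h | h
    · exact h
    · exact absurd h ha'
  · intro v hv
    simp only [Finset.mem_filter, Finset.mem_univ, true_and] at hv
    obtain ⟨z, hz, hveq⟩ := (adj_small hu).mp hv
    exact ⟨z, by simpa using hz, Subtype.ext hveq.symm⟩
  · intro z hz; rfl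

lemma sum_big [inst : DecidableRel (doubledOddGraph n).Adj] (f : V n → ℂ) (u : V n)
    (hu : u.1.card = n + 1) :
    ∑ v : V n, (if (doubledOddGraph n).Adj u v then f v else 0)
      = ∑ z ∈ u.1, f (eraseV u z hu) := by
  rw [← Finset.sum_filter]
  refine (Finset.sum_bij (fun z hz => eraseV u z hu) ?_ ?_ ?_ ?_).symm
  · intro z hz
    simp only [Finset.mem_filter, Finset.mem_univ, true_and]
    rw [adj_big hu]
    exact ⟨z, hz, rfl⟩
  · intro a ha b hb hab
    have heq : u.1.erase a = u.1.erase b := congrArg Subtype.val hab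
    by_contra hne
    have hmem : a ∈ u.1.erase b := Finset.mem_erase.mpr ⟨hne, ha⟩
    rw [← heq] at hmem
    exact (Finset.notMem_erase a u.1) hmem
  · intro v hv
    simp only [Finset.mem_filter, Finset.mem_univ, true_and] at hv
    obtain ⟨z, hz, hveq⟩ := (adj_big hu).mp hv
    exact ⟨z, hz, Subtype.ext hveq.symm⟩
  · intro z hz; rfl

lemma mulVec_adj [inst : DecidableRel (doubledOddGraph n).Adj] (f : V n → ℂ) (x : V n) :
    ((doubledOddGraph n).adjMatrix ℂ *ᵥ f) x
      = ∑ v : V n, (if (doubledOddGraph n).Adj x v then f v else 0) := by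
  simp [Matrix.mulVec, dotProduct, SimpleGraph.adjMatrix_apply, ite_mul]

lemma card_compl_small (u : V n) (hu : u.1.card = n) : u.1ᶜ.card = n + 1 := by
  rw [Finset.card_compl, Fintype.card_fin, hu]; omega

/-- the sign vector of the bipartition -/
noncomputable def sgn : V n → ℂ := fun v => if v.1.card = n then 1 else -1

/-- eigenvector of eigenvalue `n` -/
noncomputable def fxy (x y : Fin (2 * n + 1)) : V n → ℂ :=
  fun v => (if x ∈ v.1 then 1 else 0) - (if y ∈ v.1 then 1 else 0)

lemma eig_one [inst : DecidableRel (doubledOddGraph n).Adj] :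
    (doubledOddGraph n).adjMatrix ℂ *ᵥ (fun _ => (1:ℂ)) = ((n : ℂ) + 1) • (fun _ => (1:ℂ)) := by
  funext x
  rcases x.2 with hx | hx
  · rw [mulVec_adj, sum_small _ x hx, Finset.sum_const, card_compl_small x hx]
    simp
  · rw [mulVec_adj, sum_big _ x hx, Finset.sum_const, hx]
    simp

lemma eig_sgn [inst : DecidableRel (doubledOddGraph n).Adj] :
    (doubledOddGraph n).adjMatrix ℂ *ᵥ sgn = (-(n : ℂ) - 1) • sgn := by
  funext x
  by_cases hx : x.1.card = n
  · rw [mulVec_adj, sum_small _ x hx]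
    have h1 : ∀ z ∈ x.1ᶜ, sgn (insV x z hx) = -1 := by
      intro z hz
      have hz' : z ∉ x.1 := Finset.mem_compl.mp hz
      have : (insV x z hx).1.card = n + 1 := by
        rw [insV_def, Finset.card_insert_of_notMem hz', hx]
      rw [sgn, this]
      simp
    rw [Finset.sum_congr rfl h1, Finset.sum_const, card_compl_small x hx]
    simp [sgn, hx]; ring
  · have hx' : x.1.card = n + 1 := x.2.resolve_left hx
    rw [mulVec_adj, sum_big _ x hx']
    have h1 : ∀ z ∈ x.1, sgn (eraseV x z hx') = 1 := by
      intro z hz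
      have : (eraseV x z hx').1.card = n := by
        rw [eraseV_def, Finset.card_erase_of_mem hz, hx']; omega
      rw [sgn, this]
      simp
    rw [Finset.sum_congr rfl h1, Finset.sum_const, hx']
    simp [sgn, hx]; ring

lemma eig_fxy [inst : DecidableRel (doubledOddGraph n).Adj] (x y : Fin (2 * n + 1)) :
    (doubledOddGraph n).adjMatrix ℂ *ᵥ fxy x y = (n : ℂ) • fxy x y := by
  funext u
  have key_small : ∀ (hu : u.1.card = n) (w : Fin (2 * n + 1)),
      ∑ z ∈ u.1ᶜ, (if w ∈ (insV u z hu).1 then (1:ℂ) else 0)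
        = if w ∈ u.1 then (n : ℂ) + 1 else 1 := by
    intro hu w
    by_cases hw : w ∈ u.1
    · have : ∀ z ∈ u.1ᶜ, (if w ∈ (insV u z hu).1 then (1:ℂ) else 0) = 1 := by
        intro z hz
        rw [insV_def, if_pos (Finset.mem_insert_of_mem hw)]
      rw [Finset.sum_congr rfl this, Finset.sum_const, card_compl_small u hu, if_pos hw]
      push_cast
      ring
    · have : ∀ z ∈ u.1ᶜ, (if w ∈ (insV u z hu).1 then (1:ℂ) else 0)
          = if w = z then 1 else 0 := by
        intro z hz
        rw [insV_def]
        by_cases hwz : w = z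
        · rw [if_pos (by rw [hwz]; exact Finset.mem_insert_self z u.1), if_pos hwz]
        · rw [if_neg, if_neg hwz]
          intro hmem
          rcases Finset.mem_insert.mp hmem with h | h
          · exact hwz h
          · exact hw h
      rw [Finset.sum_congr rfl this, Finset.sum_ite_eq u.1ᶜ w (fun _ => (1:ℂ)),
        if_pos (Finset.mem_compl.mpr hw), if_neg hw]
  have key_big : ∀ (hu : u.1.card = n + 1) (w : Fin (2 * n + 1)),
      ∑ z ∈ u.1, (if w ∈ (eraseV u z hu).1 then (1:ℂ) else 0)
        = if w ∈ u.1 then (n : ℂ) else 0 := by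
    intro hu w
    by_cases hw : w ∈ u.1
    · have h2 : ∀ z ∈ u.1, (if w ∈ (eraseV u z hu).1 then (1:ℂ) else 0)
          = 1 - (if z = w then 1 else 0) := by
        intro z hz
        rw [eraseV_def]
        by_cases hzw : z = w
        · subst hzw
          simp [Finset.notMem_erase]
        · rw [if_pos (Finset.mem_erase.mpr ⟨fun h => hzw h.symm, hw⟩), if_neg hzw]
          ring
      rw [Finset.sum_congr rfl h2, Finset.sum_sub_distrib, Finset.sum_const, hu,
        Finset.sum_ite_eq' u.1 w (fun _ => (1:ℂ)), if_pos hw, if_pos hw]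
      push_cast
      ring
    · have h2 : ∀ z ∈ u.1, (if w ∈ (eraseV u z hu).1 then (1:ℂ) else 0) = 0 := by
        intro z hz
        rw [eraseV_def, if_neg (fun hmem => hw (Finset.mem_of_mem_erase hmem))]
      rw [Finset.sum_congr rfl h2, Finset.sum_const, if_neg hw]
      simp
  by_cases hu : u.1.card = n
  · rw [mulVec_adj, sum_small _ u hu]
    simp only [fxy]
    rw [Finset.sum_sub_distrib, key_small hu x, key_small hu y]
    by_cases hxu : x ∈ u.1 <;> by_cases hyu : y ∈ u.1 <;>
      simp [fxy, Pi.smul_apply, hxu, hyu, smul_eq_mul] <;> ring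
  · have hu' : u.1.card = n + 1 := u.2.resolve_left hu
    rw [mulVec_adj, sum_big _ u hu']
    simp only [fxy]
    rw [Finset.sum_sub_distrib, key_big hu' x, key_big hu' y]
    by_cases hxu : x ∈ u.1 <;> by_cases hyu : y ∈ u.1 <;>
      simp [fxy, Pi.smul_apply, hxu, hyu, smul_eq_mul] <;> ring

end DOG

/-- For every `n ≥ 1`, the doubled Odd graph on `2n+1` points does
not admit perfect state transfer between any pair of vertices at any time. -/
theorem stmt_15 (n : ℕ) (hn : 1 ≤ n) :
    ∀ (u v : {s : Finset (Fin (2 * n + 1)) // s.card = n ∨ s.card = n + 1}) (t : ℝ),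
      ¬ HasPST (doubledOddGraph n) u v t := by
  intro u v t hPST
  obtain ⟨huv, μ, hU⟩ := hPST
  letI := Classical.decRel (doubledOddGraph n).Adj
  have hμ : μ ≠ 0 := pst_mu_ne_zero _ t u v μ hU
  have rel : ∀ (f : DOG.V n → ℂ) (θ : ℂ),
      ((doubledOddGraph n).adjMatrix ℂ *ᵥ f = θ • f) →
      Complex.exp (Complex.I * (t : ℂ) * θ) * f u = μ * f v :=
    fun f θ hf => pst_eigen_rel _ t u v μ hU f θ hf
  have h1 := rel (fun _ => 1) ((n : ℂ) + 1) DOG.eig_one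
  have h2 := rel DOG.sgn (-(n : ℂ) - 1) DOG.eig_sgn
  have h3 : ∀ x y, Complex.exp (Complex.I * (t : ℂ) * (n : ℂ)) * DOG.fxy x y u
      = μ * DOG.fxy x y v := fun x y => rel (DOG.fxy x y) (n : ℂ) (DOG.eig_fxy x y)
  -- helper contradictions
  have helperA : ∀ x y, x ∈ u.1 → y ∉ u.1 → (x ∈ v.1 ↔ y ∈ v.1) → False := by
    intro x y hxS hyS hT
    have hrel := h3 x y
    have hu1 : DOG.fxy x y u = 1 := by simp [DOG.fxy, hxS, hyS]
    have hv0 : DOG.fxy x y v = 0 := by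
      by_cases h : x ∈ v.1
      · simp [DOG.fxy, h, hT.mp h]
      · have hy : y ∉ v.1 := fun hy => h (hT.mpr hy)
        simp [DOG.fxy, h, hy]
    rw [hu1, hv0, mul_one, mul_zero] at hrel
    exact Complex.exp_ne_zero _ hrel
  have helperB : ∀ x y, x ∈ v.1 → y ∉ v.1 → (x ∈ u.1 ↔ y ∈ u.1) → False := by
    intro x y hxT hyT hS
    have hrel := h3 x y
    have hv1 : DOG.fxy x y v = 1 := by simp [DOG.fxy, hxT, hyT]
    have hu0 : DOG.fxy x y u = 0 := by
      by_cases h : x ∈ u.1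
      · simp [DOG.fxy, h, hS.mp h]
      · have hy : y ∉ u.1 := fun hy => h (hS.mpr hy)
        simp [DOG.fxy, h, hy]
    rw [hu0, hv1, mul_zero, mul_one] at hrel
    exact hμ hrel.symm
  obtain ⟨p, hp⟩ : u.1.Nonempty := Finset.card_pos.mp (by rcases u.2 with h | h <;> omega)
  obtain ⟨q, hq⟩ : v.1.Nonempty := Finset.card_pos.mp (by rcases v.2 with h | h <;> omega)
  by_cases hST : (u.1 ∩ v.1).Nonempty
  · obtain ⟨a, ha⟩ := hST
    obtain ⟨haS, haT⟩ := Finset.mem_inter.mp ha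
    by_cases hTS : (v.1 \ u.1).Nonempty
    · obtain ⟨b, hb⟩ := hTS
      obtain ⟨hbT, hbS⟩ := Finset.mem_sdiff.mp hb
      exact helperA a b haS hbS ⟨fun _ => hbT, fun _ => haT⟩
    · by_cases hST2 : (u.1 \ v.1).Nonempty
      · obtain ⟨b, hb⟩ := hST2
        obtain ⟨hbS, hbT⟩ := Finset.mem_sdiff.mp hb
        exact helperB a b haT hbT ⟨fun _ => hbS, fun _ => haS⟩
      · have e1 : v.1 ⊆ u.1 := by
          rw [← Finset.sdiff_eq_empty_iff_subset]
          exact Finset.not_nonempty_iff_eq_empty.mp hTS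
        have e2 : u.1 ⊆ v.1 := by
          rw [← Finset.sdiff_eq_empty_iff_subset]
          exact Finset.not_nonempty_iff_eq_empty.mp hST2
        exact huv (Subtype.ext (Finset.Subset.antisymm e2 e1))
  · have hdisj : ∀ a, a ∈ u.1 → a ∉ v.1 := by
      intro a h1' h2'
      exact hST ⟨a, Finset.mem_inter.mpr ⟨h1', h2'⟩⟩
    by_cases hR : ((u.1 ∪ v.1)ᶜ).Nonempty
    · obtain ⟨b, hb⟩ := hR
      have hb' := Finset.mem_compl.mp hb
      rw [Finset.mem_union] at hb'
      push_neg at hb'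
      exact helperA p b hp hb'.1 ⟨fun h => absurd h (hdisj p hp), fun h => absurd h hb'.2⟩
    · -- antipodal case: v.1 = u.1ᶜ
      have huniv : u.1 ∪ v.1 = Finset.univ := by
        have := Finset.not_nonempty_iff_eq_empty.mp hR
        rwa [Finset.compl_eq_empty_iff] at this
      have hvT : v.1 = u.1ᶜ := by
        ext a
        simp only [Finset.mem_compl]
        constructor
        · intro haT haS
          exact hdisj a haS haT
        · intro haS
          have : a ∈ u.1 ∪ v.1 := huniv ▸ Finset.mem_univ a
          rcases Finset.mem_union.mp this with h | h
          · exact absurd h haS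
          · exact h
      -- the four spectral relations
      have hqS : q ∉ u.1 := fun h => hdisj q h hq
      have hpT : p ∉ v.1 := hdisj p hp
      have hEn : Complex.exp (Complex.I * (t : ℂ) * (n : ℂ)) = -μ := by
        have hrel := h3 p q
        have hu1 : DOG.fxy p q u = 1 := by simp [DOG.fxy, hp, hqS]
        have hv1 : DOG.fxy p q v = -1 := by simp [DOG.fxy, hq, hpT]
        rw [hu1, hv1, mul_one] at hrel
        linear_combination hrel
      have hE1 : Complex.exp (Complex.I * (t : ℂ) * ((n : ℂ) + 1)) = μ := by
        simpa using h1
      have hsgn : DOG.sgn u * DOG.sgn v = -1 := by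
        rcases u.2 with hcu | hcu
        · have hcv : v.1.card = n + 1 := by
            rw [hvT, Finset.card_compl, Fintype.card_fin, hcu]; omega
          have hsu : DOG.sgn u = 1 := by simp only [DOG.sgn]; rw [if_pos hcu]
          have hsv : DOG.sgn v = -1 := by simp only [DOG.sgn]; rw [if_neg (by omega)]
          rw [hsu, hsv]; ring
        · have hcv : v.1.card = n := by
            rw [hvT, Finset.card_compl, Fintype.card_fin, hcu]; omega
          have hsu : DOG.sgn u = -1 := by simp only [DOG.sgn]; rw [if_neg (by omega)]
          have hsv : DOG.sgn v = 1 := by simp only [DOG.sgn]; rw [if_pos hcv]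
          rw [hsu, hsv]; ring
      have hE2 : Complex.exp (Complex.I * (t : ℂ) * (-(n : ℂ) - 1)) = -μ := by
        have hs2 : DOG.sgn u * DOG.sgn u = 1 := by
          rw [DOG.sgn]; by_cases h : u.1.card = n <;> simp [h]
        have := h2
        -- sgn u = ± 1, sgn v = -sgn u
        have hv' : DOG.sgn v = -DOG.sgn u := by
          have h4 : DOG.sgn u * (DOG.sgn u * DOG.sgn v) = DOG.sgn u * (-1) := by rw [hsgn]
          rw [← mul_assoc, hs2, one_mul] at h4
          linear_combination h4
        rw [hv'] at this
        -- this : E * sgn u = μ * (-sgn u)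
        have h5 := congrArg (fun z => z * DOG.sgn u) this
        rw [mul_assoc, hs2, mul_one] at h5
        rw [h5]
        linear_combination DOG.sgn u * DOG.sgn u * μ - μ * hs2
      -- algebra: contradiction
      have hprod : μ * (-μ) = 1 := by
        have hpp : Complex.exp (Complex.I * (t : ℂ) * ((n : ℂ) + 1))
            * Complex.exp (Complex.I * (t : ℂ) * (-(n : ℂ) - 1)) = 1 := by
          rw [← Complex.exp_add, show Complex.I * (t : ℂ) * ((n : ℂ) + 1)
            + Complex.I * (t : ℂ) * (-(n : ℂ) - 1) = 0 by ring, Complex.exp_zero]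
        rw [hE1, hE2] at hpp
        exact hpp
      have he : Complex.exp (Complex.I * (t : ℂ)) = -1 := by
        have hsplit : Complex.exp (Complex.I * (t : ℂ) * ((n : ℂ) + 1))
            = Complex.exp (Complex.I * (t : ℂ) * (n : ℂ)) * Complex.exp (Complex.I * (t : ℂ)) := by
          rw [← Complex.exp_add]
          congr 1
          ring
        rw [hE1, hEn] at hsplit
        -- μ = -μ * e
        have h6 : μ * (1 + Complex.exp (Complex.I * (t : ℂ))) = 0 := by linear_combination hsplit
        rcases mul_eq_zero.mp h6 with h | h
        · exact absurd h hμ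
        · linear_combination h
      have hen : Complex.exp (Complex.I * (t : ℂ) * (n : ℂ)) = (-1) ^ n := by
        rw [show Complex.I * (t : ℂ) * (n : ℂ) = (n : ℂ) * (Complex.I * (t : ℂ)) by ring,
          Complex.exp_nat_mul, he]
      have hμval : -μ = (-1) ^ n := by rw [← hEn, hen]
      have hsq : μ * μ = 1 := by
        have : (-μ) * (-μ) = ((-1) ^ n : ℂ) * ((-1) ^ n : ℂ) := by rw [hμval]
        rw [neg_mul_neg] at this
        rw [this, ← pow_add]
        exact Even.neg_one_pow ⟨n, rfl⟩
      have : (1 : ℂ) = -1 := by linear_combination -hprod - hsq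
      norm_num at this
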